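/- Fix an integer n ≥ 3 and nonnegative integers k_1,…,k_{n−1} with |k| := k_1+⋯+k_{n−1}. For integers g large enough that 4g+2n−2−|k| ≥ 0, define Β(g) := b_{k_1,…,k_{n−1}, 4g+2n−2−|k|} / (2·(4g+2n−5)!!). Then as g → ∞, Β(g) converges, with limit (1+(−1)^n)/2 if (k_1,…,k_{n−1}) = (0,0,…,0); limit −(−1)^n/2 if (k_1,…,k_{n−1}) = (0,…,0,1); limit −1/2 if (k_1,…,k_{n−1}) = (1,0,…,0); and limit 0 for every other choice of (k_1,…,k_{n−1}). -/

import Mathlib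

/-- Double factorial on naturals: `0!! = 1`, `1!! = 1`, `(k+2)!! = (k+2)·k!!`. -/
def df : ℕ → ℕ
  | 0 => 1
  | 1 => 1
  | k + 2 => (k + 2) * df k

/-- Double factorial of an integer, with `z!! = 1` for `z ≤ 0` (so `(-1)!! = 0!! = 1`). -/
def dfacZ (z : ℤ) : ℤ := if z ≤ 0 then 1 else (df z.toNat : ℤ)

/-- The matrices `L_k`. -/
noncomputable def Lmat (k : ℕ) : Matrix (Fin 2) (Fin 2) ℝ :=
  if k = 0 then !![1, 0; 0, 0]
  else if k % 2 = 0 then !![(df (k - 1) : ℝ), 0; 0, -(df (k - 1) : ℝ)]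
  else !![0, -(df k : ℝ); (df (k - 2) : ℝ), 0]

/-- `l_{k_1,…,k_m} = tr(L_{k_1}⋯L_{k_m})` if all indices are nonnegative, else `0`. -/
noncomputable def lSeq (m : ℕ) (k : Fin m → ℤ) : ℝ :=
  if ∀ q, 0 ≤ k q then Matrix.trace ((List.ofFn fun q => Lmat (k q).toNat).prod) else 0

/-- The matrices `B_k`, with entries in `ℚ[N]`. -/
noncomputable def Bmat (k : ℕ) : Matrix (Fin 2) (Fin 2) (Polynomial ℚ) :=
  if k = 0 then !![1, 0; 0, 0]
  else if k % 2 = 0 then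
    !![Polynomial.C ((df (k - 1) : ℚ) * (1 + (-1 : ℚ) ^ ((k - 2) / 2)) / (k : ℚ)) * Polynomial.X, 0;
       0, -(Polynomial.C ((df (k - 1) : ℚ) * (1 + (-1 : ℚ) ^ ((k - 2) / 2)) / (k : ℚ)) * Polynomial.X)]
  else
    !![0, -(Polynomial.C ((df (k - 2) : ℚ)) * Polynomial.X);
       Polynomial.C ((df (k - 2) : ℚ) * (-1 : ℚ) ^ ((k - 1) / 2)), 0]

/-- `b_{k_1,…,k_m} = [N^1] tr(B_{k_1}⋯B_{k_m})` if all indices are nonnegative, else `0`. -/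
noncomputable def bSeq (m : ℕ) (k : Fin m → ℤ) : ℚ :=
  if ∀ q, 0 ≤ k q then (Matrix.trace ((List.ofFn fun q => Bmat (k q).toNat).prod)).coeff 1 else 0

/-- `J_{σ,q}(j)`: `-j-1` if `σ(q) < σ(q+1)`, and `j` if `σ(q) > σ(q+1)` (indices cyclic). -/
def Jfun {m : ℕ} [NeZero m] (σ : Equiv.Perm (Fin m)) (q : Fin m) (j : ℕ) : ℤ :=
  if σ q < σ (q + 1) then -(j : ℤ) - 1 else (j : ℤ)

/-- `K_{i,σ,q}(j) = i_{σ(q)} + J_{σ,q}(j_q) − J_{σ,q−1}(j_{q−1})`, indices cyclic. -/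
def Kfun {m : ℕ} [NeZero m] (i : Fin m → ℤ) (σ : Equiv.Perm (Fin m)) (j : Fin m → ℕ)
    (q : Fin m) : ℤ :=
  i (σ q) + Jfun σ q (j q) - Jfun σ (q - 1) (j (q - 1))

/-- `m(σ) = #{q : σ(q+1) < σ(q)}` (indices cyclic). -/
def mcount {m : ℕ} [NeZero m] (σ : Equiv.Perm (Fin m)) : ℕ :=
  (Finset.univ.filter fun q : Fin m => σ (q + 1) < σ q).card

/-- The normalized enumeration `𝒢^og` of ordinary graphs, via Lemma 2.2:
`𝒢^og(g) = (1/(m·(2g+2m−3)!!)) Σ_σ (−1)^{m(σ)+1} Σ_j l_{K_{i,σ,1}(j),…,K_{i,σ,m}(j)}`. -/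
noncomputable def Gog (m : ℕ) [NeZero m] (i : Fin m → ℤ) (g : ℤ) : ℝ :=
  (1 / ((m : ℝ) * (dfacZ (2 * g + 2 * m - 3) : ℝ))) *
    ∑ σ : Equiv.Perm (Fin m), (-1 : ℝ) ^ (mcount σ + 1) *
      ∑' j : Fin m → ℕ, lSeq m (Kfun i σ j)

/-- The normalized enumeration `𝒢^rg` of ribbon graphs with one face, via Lemma 3.1:
`𝒢^rg(g) = (1/(2m·(4g+2m−5)!!)) Σ_σ (−1)^{m(σ)+1} Σ_j b_{K_{i,σ,1}(j),…,K_{i,σ,m}(j)}`. -/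
noncomputable def Grg (m : ℕ) [NeZero m] (i : Fin m → ℤ) (g : ℤ) : ℝ :=
  (1 / (2 * (m : ℝ) * (dfacZ (4 * g + 2 * m - 5) : ℝ))) *
    ∑ σ : Equiv.Perm (Fin m), (-1 : ℝ) ^ (mcount σ + 1) *
      ∑' j : Fin m → ℕ, ((bSeq m (Kfun i σ j) : ℚ) : ℝ)

/-- `σ ∈ S_{n+2}^{(r,n+2−r)}`: unimodal permutations of `{0,…,n+1}` fixing the last point,
strictly decreasing on positions `0,…,n+1−r` down to the value `0`, then strictly increasing
on positions `n+1−r,…,n+1` up to the value `n+1`. -/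
def SPerm (n r : ℕ) (σ : Equiv.Perm (Fin (n + 2))) : Prop :=
  σ (Fin.last (n + 1)) = Fin.last (n + 1) ∧
  σ ⟨n + 1 - r, by omega⟩ = ⟨0, by omega⟩ ∧
  (∀ a b : Fin (n + 2), a < b → b.val ≤ n + 1 - r → σ b < σ a) ∧
  (∀ a b : Fin (n + 2), n + 1 - r ≤ a.val → a < b → σ a < σ b)

/-- `σ ∈ S_{n+2}^{{2}} = ∪_{r=1}^{n+1} S_{n+2}^{(r,n+2−r)}`. -/
def inS2 (n : ℕ) (σ : Equiv.Perm (Fin (n + 2))) : Prop :=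
  ∃ r, 1 ≤ r ∧ r ≤ n + 1 ∧ SPerm n r σ

open Polynomial Filter Matrix

lemma df_pos (n : ℕ) : 0 < df n := by
  induction n using Nat.strong_induction_on with
  | _ n ih =>
    match n with
    | 0 => simp [df]
    | 1 => simp [df]
    | k + 2 => rw [df]; exact Nat.mul_pos (by omega) (ih k (by omega))

lemma df_add_two (k : ℕ) : df (k + 2) = (k + 2) * df k := rfl

lemma df_le_df_add_two_mul (k j : ℕ) : df k ≤ df (k + 2 * j) := by
  induction j with
  | zero => simp
  | succ j ih =>
    calc df k ≤ df (k + 2 * j) := ih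
    _ ≤ (k + 2 * j + 2) * df (k + 2 * j) := Nat.le_mul_of_pos_left _ (by omega)
    _ = df (k + 2 * j + 2) := (df_add_two _).symm
    _ = df (k + 2 * (j + 1)) := by ring_nf

lemma Bmat_zero : Bmat 0 = !![1, 0; 0, 0] := by simp [Bmat]

lemma Bmat_one : Bmat 1 = !![0, -X; 1, 0] := by
  simp [Bmat, df]

lemma Bmat_even (K : ℕ) (h0 : K ≠ 0) (h2 : K % 2 = 0) :
    Bmat K = !![C ((df (K - 1) : ℚ) * (1 + (-1 : ℚ) ^ ((K - 2) / 2)) / (K : ℚ)) * X, 0;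
       0, -(C ((df (K - 1) : ℚ) * (1 + (-1 : ℚ) ^ ((K - 2) / 2)) / (K : ℚ)) * X)] := by
  rw [Bmat, if_neg h0, if_pos h2]

lemma Bmat_odd (K : ℕ) (h2 : K % 2 = 1) :
    Bmat K = !![0, -(C ((df (K - 2) : ℚ)) * X);
       C ((df (K - 2) : ℚ) * (-1 : ℚ) ^ ((K - 1) / 2)), 0] := by
  rw [Bmat, if_neg (by omega), if_neg (by omega)]

lemma Bmat_zero_mul_self : Bmat 0 * Bmat 0 = Bmat 0 := by
  rw [Bmat_zero, Matrix.mul_fin_two]; norm_num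

lemma Bmat_zero_pow (r : ℕ) : Bmat 0 ^ (r + 1) = Bmat 0 := by
  induction r with
  | zero => simp
  | succ r ih => rw [pow_succ, ih, Bmat_zero_mul_self]

lemma prod_ofFn_zero (r : ℕ) : (List.ofFn fun _ : Fin r => Bmat 0).prod = Bmat 0 ^ r := by
  simp [List.ofFn_const]

lemma prod_single (r : ℕ) (p₀ : Fin r) :
    (List.ofFn fun p => Bmat (if p = p₀ then 1 else 0)).prod
      = Bmat 0 ^ (p₀ : ℕ) * Bmat 1 * Bmat 0 ^ (r - 1 - (p₀ : ℕ)) := by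
  induction r with
  | zero => exact p₀.elim0
  | succ r ih =>
    rw [List.ofFn_succ', List.prod_concat]
    rcases eq_or_ne p₀ (Fin.last r) with rfl | hne
    · have h1 : (fun i : Fin r => Bmat (if i.castSucc = Fin.last r then 1 else 0))
          = fun _ : Fin r => Bmat 0 := by
        funext i
        rw [if_neg (Fin.castSucc_lt_last i).ne]
      rw [h1, prod_ofFn_zero, if_pos rfl]
      simp [mul_assoc]
    · obtain ⟨q, rfl⟩ := Fin.exists_castSucc_eq.mpr hne
      have h1 : (fun i : Fin r => Bmat (if i.castSucc = q.castSucc then 1 else 0))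
          = fun i : Fin r => Bmat (if i = q then 1 else 0) := by
        funext i
        simp [Fin.castSucc_inj]
      rw [h1, ih, if_neg (Ne.symm hne)]
      have hq : (q : ℕ) < r := q.isLt
      have h2 : r + 1 - 1 - (q : ℕ) = (r - 1 - (q : ℕ)) + 1 := by
        have := q.isLt; omega
      rw [Fin.coe_castSucc, h2, pow_succ, mul_assoc]

lemma trace_mul_two (M B : Matrix (Fin 2) (Fin 2) ℚ[X]) :
    Matrix.trace (M * B) = M 0 0 * B 0 0 + M 0 1 * B 1 0 + M 1 0 * B 0 1 + M 1 1 * B 1 1 := by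
  simp [Matrix.trace, Matrix.mul_apply, Fin.sum_univ_two, Matrix.diag]
  ring

lemma coeff_trace_even (M : Matrix (Fin 2) (Fin 2) ℚ[X]) (c : ℚ) :
    (Matrix.trace (M * !![C c * X, 0; 0, -(C c * X)])).coeff 1
      = c * ((M 0 0).coeff 0 - (M 1 1).coeff 0) := by
  have ht : Matrix.trace (M * !![C c * X, 0; 0, -(C c * X)])
      = C c * (M 0 0 * X) + - (C c * (M 1 1 * X)) := by
    rw [trace_mul_two]; show M 0 0 * (C c * X) + M 0 1 * 0 + M 1 0 * 0 + M 1 1 * -(C c * X) = _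
    ring
  have e1 : (M 0 0 * X).coeff 1 = (M 0 0).coeff 0 := coeff_mul_X _ 0
  have e2 : (M 1 1 * X).coeff 1 = (M 1 1).coeff 0 := coeff_mul_X _ 0
  rw [ht, coeff_add, coeff_neg, coeff_C_mul, coeff_C_mul, e1, e2]
  ring

lemma coeff_trace_odd (M : Matrix (Fin 2) (Fin 2) ℚ[X]) (c d : ℚ) :
    (Matrix.trace (M * !![0, -(C c * X); C d, 0])).coeff 1
      = d * (M 0 1).coeff 1 - c * (M 1 0).coeff 0 := by
  have ht : Matrix.trace (M * !![0, -(C c * X); C d, 0])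
      = C d * M 0 1 + - (C c * (M 1 0 * X)) := by
    rw [trace_mul_two]; show M 0 0 * 0 + M 0 1 * C d + M 1 0 * -(C c * X) + M 1 1 * 0 = _
    ring
  have e1 : (M 1 0 * X).coeff 1 = (M 1 0).coeff 0 := coeff_mul_X _ 0
  rw [ht, coeff_add, coeff_neg, coeff_C_mul, coeff_C_mul, e1]
  ring

lemma bSeq_snoc (m : ℕ) (k : Fin m → ℕ) (K : ℤ) (hK : 0 ≤ K) :
    bSeq (m + 1) (Fin.snoc (fun p => (k p : ℤ)) K)
      = (Matrix.trace ((List.ofFn fun p => Bmat (k p)).prod * Bmat K.toNat)).coeff 1 := by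
  rw [bSeq, if_pos]
  · rw [List.ofFn_succ', List.prod_concat]
    simp only [Fin.snoc_castSucc, Fin.snoc_last, Int.toNat_natCast]
  · intro q
    induction q using Fin.lastCases with
    | last => simpa using hK
    | cast i => simp [Fin.snoc_castSucc]

lemma tendsto_aux_ratio (a b : ℝ) :
    Tendsto (fun g : ℤ => (4 * (g:ℝ) + a) / (4 * (g:ℝ) + b)) atTop (nhds 1) := by
  have h4 : Tendsto (fun g : ℤ => 4 * (g:ℝ) + b) atTop atTop := by
    apply tendsto_atTop_add_const_right
    exact (tendsto_intCast_atTop_atTop (R := ℝ)).const_mul_atTop (by norm_num)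
  have hinv := h4.inv_tendsto_atTop
  have h2 : Tendsto (fun g : ℤ => 1 + (a - b) * (4 * (g:ℝ) + b)⁻¹) atTop
      (nhds (1 + (a - b) * 0)) := tendsto_const_nhds.add (hinv.const_mul _)
  rw [mul_zero, add_zero] at h2
  refine h2.congr' ?_
  obtain ⟨g₀, hg₀⟩ := exists_int_gt (|b| / 4)
  filter_upwards [eventually_ge_atTop g₀] with g hg
  have h1 : (|b| / 4 : ℝ) < (g:ℝ) := lt_of_lt_of_le hg₀ (by exact_mod_cast hg)
  have h0 : 4 * (g:ℝ) + b ≠ 0 := by nlinarith [neg_abs_le b, abs_nonneg b]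
  field_simp
  ring

lemma tendsto_aux_inv (c : ℝ) :
    Tendsto (fun g : ℤ => c * ((g:ℝ))⁻¹) atTop (nhds 0) := by
  have h := (tendsto_intCast_atTop_atTop (R := ℝ)).inv_tendsto_atTop
  have h2 := h.const_mul (b := c)
  rw [mul_zero] at h2
  exact h2

lemma expr_eq (m : ℕ) (k : Fin (m + 2) → ℕ) (g : ℤ)
    (hg : ((∑ p, k p : ℕ) : ℤ) + 10 ≤ g) :
    ((bSeq (m + 3)
        (Fin.snoc (fun p => (k p : ℤ)) (4 * g + 2 * ((m + 3 : ℕ) : ℤ) - 2 - ∑ p, (k p : ℤ))) : ℚ) : ℝ) /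
        (2 * (dfacZ (4 * g + 2 * ((m + 3 : ℕ) : ℤ) - 5) : ℝ))
      = (((Matrix.trace ((List.ofFn fun p => Bmat (k p)).prod *
            Bmat ((4 * g + 2 * ((m + 3 : ℕ) : ℤ) - 2 - ((∑ p, k p : ℕ) : ℤ)).toNat))).coeff 1 : ℚ) : ℝ) /
          (2 * (df ((4 * g + 2 * ((m + 3 : ℕ) : ℤ) - 5).toNat) : ℝ)) := by
  have hsum : (∑ p, (k p : ℤ)) = ((∑ p, k p : ℕ) : ℤ) := by push_cast; rfl
  rw [hsum]
  have h1 : bSeq (m + 3)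
      (Fin.snoc (fun p => (k p : ℤ)) (4 * g + 2 * ((m + 3 : ℕ) : ℤ) - 2 - ((∑ p, k p : ℕ) : ℤ)))
      = (Matrix.trace ((List.ofFn fun p => Bmat (k p)).prod *
          Bmat ((4 * g + 2 * ((m + 3 : ℕ) : ℤ) - 2 - ((∑ p, k p : ℕ) : ℤ)).toNat))).coeff 1 :=
    bSeq_snoc (m + 2) k _ (by push_cast at hg ⊢; omega)
  rw [h1, dfacZ, if_neg (by push_cast at hg ⊢; omega)]
  norm_cast

set_option maxHeartbeats 2000000 in
/-- Limit (3.7) in the paper (paper `n = m+3 ≥ 3`): for fixed nonnegative `k_1,…,k_{n−1}`,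
`b_{k_1,…,k_{n−1},4g+2n−2−|k|}/(2·(4g+2n−5)!!)` converges as `g → ∞`, to `(1+(−1)^n)/2` if all
`k_p = 0`, to `−(−1)^n/2` if `(k_1,…,k_{n−1}) = (0,…,0,1)`, to `−1/2` if
`(k_1,…,k_{n−1}) = (1,0,…,0)`, and to `0` otherwise. -/
theorem bSeq_normalized_limit (m : ℕ) (k : Fin (m + 2) → ℕ) :
    Filter.Tendsto
      (fun g : ℤ =>
        ((bSeq (m + 3)
            (Fin.snoc (fun p => (k p : ℤ)) (4 * g + 2 * (m + 3 : ℕ) - 2 - ∑ p, (k p : ℤ))) : ℚ) : ℝ) /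
          (2 * (dfacZ (4 * g + 2 * (m + 3 : ℕ) - 5) : ℝ)))
      Filter.atTop
      (nhds (if ∀ p, k p = 0 then (1 + (-1 : ℝ) ^ (m + 3 : ℕ)) / 2
        else if k (Fin.last (m + 1)) = 1 ∧ ∀ p, p ≠ Fin.last (m + 1) → k p = 0 then
          -(-1 : ℝ) ^ (m + 3 : ℕ) / 2
        else if k 0 = 1 ∧ ∀ p, p ≠ 0 → k p = 0 then -(1 / 2) else 0)) := by
  classical
  set s : ℕ := ∑ p, k p with hs
  set M : Matrix (Fin 2) (Fin 2) (Polynomial ℚ) :=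
    (List.ofFn fun p : Fin (m + 2) => Bmat (k p)).prod with hM
  by_cases h0 : ∀ p, k p = 0
  · rw [if_pos h0]
    have hs0 : s = 0 := Finset.sum_eq_zero fun p _ => h0 p
    have hMc : M = Bmat 0 := by
      rw [hM]
      have he : (fun p : Fin (m + 2) => Bmat (k p)) = fun _ => Bmat 0 :=
        funext fun p => by rw [h0 p]
      rw [he, prod_ofFn_zero]
      exact Bmat_zero_pow (m + 1)
    rcases Nat.even_or_odd (m + 3) with hpar | hpar
    · have hval : (1 + (-1 : ℝ) ^ (m + 3)) / 2 = 1 := by rw [hpar.neg_one_pow]; norm_num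
      rw [hval]
      refine (tendsto_aux_ratio (2 * (m:ℝ) + 3) (2 * (m:ℝ) + 4)).congr' ?_
      filter_upwards [eventually_ge_atTop ((s:ℤ) + 10)] with g hg
      rw [expr_eq m k g (by rw [← hs]; exact hg)]
      set Kt : ℕ := (4 * g + 2 * ((m + 3 : ℕ) : ℤ) - 2 - ((∑ p, k p : ℕ) : ℤ)).toNat with hKtdef
      set At : ℕ := (4 * g + 2 * ((m + 3 : ℕ) : ℤ) - 5).toNat with hAtdef
      have hKt : (Kt : ℤ) = 4 * g + 2 * ((m + 3 : ℕ) : ℤ) - 2 := by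
        rw [hKtdef, ← hs, hs0]; push_cast; omega
      have hAt : (At : ℤ) = 4 * g + 2 * ((m + 3 : ℕ) : ℤ) - 5 := by
        rw [hAtdef]; push_cast; omega
      rw [← hM, hMc, Bmat_even Kt (by omega) (by omega), coeff_trace_even]
      have hc00 : ((Bmat 0 : Matrix (Fin 2) (Fin 2) (Polynomial ℚ)) 0 0).coeff 0 = 1 := by
        rw [Bmat_zero]; simp
      have hc11 : ((Bmat 0 : Matrix (Fin 2) (Fin 2) (Polynomial ℚ)) 1 1).coeff 0 = 0 := by
        rw [Bmat_zero]; simp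
      rw [hc00, hc11]
      have h3 : (m + 3) % 2 = 0 := Nat.even_iff.mp hpar
      have hmod : (Kt - 2) / 2 % 2 = 0 := by omega
      rw [neg_one_pow_eq_pow_mod_two, hmod, pow_zero]
      have hKA : Kt - 1 = At + 2 := by omega
      rw [hKA, df_add_two]
      have hKtR : (Kt : ℝ) = 4 * (g:ℝ) + 2 * (m:ℝ) + 4 := by
        have h := congrArg (Int.cast : ℤ → ℝ) hKt
        push_cast at h; linarith
      have hAtR : (At : ℝ) = 4 * (g:ℝ) + 2 * (m:ℝ) + 1 := by
        have h := congrArg (Int.cast : ℤ → ℝ) hAt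
        push_cast at h; linarith
      have hgR : (0:ℝ) ≤ (g:ℝ) := by exact_mod_cast (by omega : (0:ℤ) ≤ g)
      have hdf : (df At : ℝ) ≠ 0 := by
        have := df_pos At; positivity
      have h2 : 4 * (g:ℝ) + 2 * (m:ℝ) + 4 ≠ 0 := by positivity
      push_cast
      rw [hKtR, hAtR]
      field_simp
      ring
    · have hval : (1 + (-1 : ℝ) ^ (m + 3)) / 2 = 0 := by rw [hpar.neg_one_pow]; norm_num
      rw [hval]
      refine tendsto_const_nhds.congr' ?_
      filter_upwards [eventually_ge_atTop ((s:ℤ) + 10)] with g hg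
      rw [expr_eq m k g (by rw [← hs]; exact hg)]
      set Kt : ℕ := (4 * g + 2 * ((m + 3 : ℕ) : ℤ) - 2 - ((∑ p, k p : ℕ) : ℤ)).toNat with hKtdef
      have hKt : (Kt : ℤ) = 4 * g + 2 * ((m + 3 : ℕ) : ℤ) - 2 := by
        rw [hKtdef, ← hs, hs0]; push_cast; omega
      rw [← hM, hMc, Bmat_even Kt (by omega) (by omega), coeff_trace_even]
      have h3 : (m + 3) % 2 = 1 := Nat.odd_iff.mp hpar
      have hmod : (Kt - 2) / 2 % 2 = 1 := by omega
      rw [neg_one_pow_eq_pow_mod_two, hmod, pow_one]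
      norm_num
  · by_cases h1 : k (Fin.last (m + 1)) = 1 ∧ ∀ p, p ≠ Fin.last (m + 1) → k p = 0
    · rw [if_neg h0, if_pos h1]
      have hk' : (fun p : Fin (m + 2) => Bmat (k p)) =
          fun p => Bmat (if p = Fin.last (m + 1) then 1 else 0) := by
        funext p
        rcases eq_or_ne p (Fin.last (m + 1)) with rfl | hp
        · rw [h1.1, if_pos rfl]
        · rw [h1.2 p hp, if_neg hp]
      have hs1 : s = 1 := by
        rw [hs, Finset.sum_eq_single (Fin.last (m + 1))]
        · exact h1.1
        · exact fun p _ hp => h1.2 p hp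
        · simp
      have hMc : M = !![0, -Polynomial.X; 0, 0] := by
        rw [hM, hk', prod_single (m + 2) (Fin.last (m + 1)), Fin.val_last]
        have e0 : m + 2 - 1 - (m + 1) = 0 := by omega
        rw [e0, pow_zero, mul_one]
        have e1 : Bmat 0 ^ (m + 1) = Bmat 0 := Bmat_zero_pow m
        rw [e1, Bmat_zero, Bmat_one, Matrix.mul_fin_two]
        norm_num
      refine tendsto_const_nhds.congr' ?_
      filter_upwards [eventually_ge_atTop ((s:ℤ) + 10)] with g hg
      rw [expr_eq m k g (by rw [← hs]; exact hg)]
      set Kt : ℕ := (4 * g + 2 * ((m + 3 : ℕ) : ℤ) - 2 - ((∑ p, k p : ℕ) : ℤ)).toNat with hKtdef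
      set At : ℕ := (4 * g + 2 * ((m + 3 : ℕ) : ℤ) - 5).toNat with hAtdef
      have hKt : (Kt : ℤ) = 4 * g + 2 * ((m + 3 : ℕ) : ℤ) - 3 := by
        rw [hKtdef, ← hs, hs1]; push_cast; omega
      have hAt : (At : ℤ) = 4 * g + 2 * ((m + 3 : ℕ) : ℤ) - 5 := by
        rw [hAtdef]; push_cast; omega
      rw [← hM, hMc, Bmat_odd Kt (by omega), coeff_trace_odd]
      have e01 : ((!![0, -Polynomial.X; 0, 0] : Matrix (Fin 2) (Fin 2) (Polynomial ℚ)) 0 1).coeff 1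
          = -1 := by
        show (-Polynomial.X : Polynomial ℚ).coeff 1 = -1
        simp
      have e10 : ((!![0, -Polynomial.X; 0, 0] : Matrix (Fin 2) (Fin 2) (Polynomial ℚ)) 1 0).coeff 0
          = 0 := by
        show (0 : Polynomial ℚ).coeff 0 = 0
        simp
      rw [e01, e10]
      have hmod : (Kt - 1) / 2 % 2 = (m + 3) % 2 := by omega
      have hpow : ((-1:ℚ)) ^ ((Kt - 1) / 2) = (-1:ℚ) ^ (m + 3) := by
        rw [neg_one_pow_eq_pow_mod_two, hmod, ← neg_one_pow_eq_pow_mod_two]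
      rw [hpow]
      have hKA : Kt - 2 = At := by omega
      rw [hKA]
      have hdf : (df At : ℝ) ≠ 0 := by
        have := df_pos At; positivity
      push_cast
      field_simp
      ring
    · by_cases h2 : k 0 = 1 ∧ ∀ p, p ≠ 0 → k p = 0
      · rw [if_neg h0, if_neg h1, if_pos h2]
        have hk' : (fun p : Fin (m + 2) => Bmat (k p)) =
            fun p => Bmat (if p = (0 : Fin (m + 2)) then 1 else 0) := by
          funext p
          rcases eq_or_ne p (0 : Fin (m + 2)) with rfl | hp
          · rw [h2.1, if_pos rfl]
          · rw [h2.2 p hp, if_neg hp]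
        have hs1 : s = 1 := by
          rw [hs, Finset.sum_eq_single (0 : Fin (m + 2))]
          · exact h2.1
          · exact fun p _ hp => h2.2 p hp
          · simp
        have hMc : M = !![0, 0; 1, 0] := by
          rw [hM, hk', prod_single (m + 2) 0]
          have e0 : ((0 : Fin (m + 2)) : ℕ) = 0 := rfl
          have e0' : m + 2 - 1 - 0 = m + 1 := by omega
          rw [e0, e0', pow_zero, one_mul]
          have e1 : Bmat 0 ^ (m + 1) = Bmat 0 := Bmat_zero_pow m
          rw [e1, Bmat_zero, Bmat_one, Matrix.mul_fin_two]
          norm_num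
        refine tendsto_const_nhds.congr' ?_
        filter_upwards [eventually_ge_atTop ((s:ℤ) + 10)] with g hg
        rw [expr_eq m k g (by rw [← hs]; exact hg)]
        set Kt : ℕ := (4 * g + 2 * ((m + 3 : ℕ) : ℤ) - 2 - ((∑ p, k p : ℕ) : ℤ)).toNat with hKtdef
        set At : ℕ := (4 * g + 2 * ((m + 3 : ℕ) : ℤ) - 5).toNat with hAtdef
        have hKt : (Kt : ℤ) = 4 * g + 2 * ((m + 3 : ℕ) : ℤ) - 3 := by
          rw [hKtdef, ← hs, hs1]; push_cast; omega
        have hAt : (At : ℤ) = 4 * g + 2 * ((m + 3 : ℕ) : ℤ) - 5 := by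
          rw [hAtdef]; push_cast; omega
        rw [← hM, hMc, Bmat_odd Kt (by omega), coeff_trace_odd]
        have e01 : ((!![0, 0; 1, 0] : Matrix (Fin 2) (Fin 2) (Polynomial ℚ)) 0 1).coeff 1
            = 0 := by
          show (0 : Polynomial ℚ).coeff 1 = 0
          simp
        have e10 : ((!![0, 0; 1, 0] : Matrix (Fin 2) (Fin 2) (Polynomial ℚ)) 1 0).coeff 0
            = 1 := by
          show (1 : Polynomial ℚ).coeff 0 = 1
          simp
        rw [e01, e10]
        have hKA : Kt - 2 = At := by omega
        rw [hKA]
        have hdf : (df At : ℝ) ≠ 0 := by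
          have := df_pos At; positivity
        push_cast
        field_simp
        ring
      · rw [if_neg h0, if_neg h1, if_neg h2]
        rcases Nat.lt_or_ge s 2 with hlt | hs2
        · -- s = 1, with the 1 in the middle
          have hsne : s ≠ 0 := by
            intro hzz
            apply h0
            intro p
            exact Finset.sum_eq_zero_iff.mp (hs.symm.trans hzz) p (Finset.mem_univ p)
          have hs1 : s = 1 := by omega
          obtain ⟨p₀, hp₀⟩ : ∃ p₀, k p₀ ≠ 0 := by
            by_contra hno
            push_neg at hno
            exact h0 hno
          have hk1 : k p₀ = 1 := by
            have hle : k p₀ ≤ s :=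
              hs ▸ Finset.single_le_sum (fun p _ => Nat.zero_le (k p)) (Finset.mem_univ p₀)
            omega
          have hrest : ∀ p, p ≠ p₀ → k p = 0 := by
            intro p hp
            have hsplit := Finset.add_sum_erase Finset.univ k (Finset.mem_univ p₀)
            rw [← hs] at hsplit
            have hz : ∑ q ∈ Finset.univ.erase p₀, k q = 0 := by omega
            exact Finset.sum_eq_zero_iff.mp hz p (Finset.mem_erase.mpr ⟨hp, Finset.mem_univ p⟩)
          have hp₀l : p₀ ≠ Fin.last (m + 1) := by
            rintro rfl
            exact h1 ⟨hk1, hrest⟩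
          have hp₀0 : p₀ ≠ 0 := by
            rintro rfl
            exact h2 ⟨hk1, hrest⟩
          have hv1 : 1 ≤ (p₀ : ℕ) := by
            rcases Nat.eq_zero_or_pos (p₀ : ℕ) with h | h
            · exact absurd (Fin.ext h : p₀ = 0) hp₀0
            · omega
          have hv2 : (p₀ : ℕ) ≤ m := by
            have := Fin.val_lt_last hp₀l
            omega
          have hk' : (fun p : Fin (m + 2) => Bmat (k p)) =
              fun p => Bmat (if p = p₀ then 1 else 0) := by
            funext p
            rcases eq_or_ne p p₀ with rfl | hp
            · rw [hk1, if_pos rfl]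
            · rw [hrest p hp, if_neg hp]
          have hMc : M = !![0, 0; 0, 0] := by
            rw [hM, hk', prod_single (m + 2) p₀]
            obtain ⟨a, ha⟩ : ∃ a, (p₀ : ℕ) = a + 1 := ⟨(p₀ : ℕ) - 1, by omega⟩
            obtain ⟨b, hb⟩ : ∃ b, m + 2 - 1 - (p₀ : ℕ) = b + 1 := ⟨m - (p₀ : ℕ), by omega⟩
            rw [hb, ha, Bmat_zero_pow a, Bmat_zero_pow b, Bmat_zero, Bmat_one]
            rw [Matrix.mul_fin_two, Matrix.mul_fin_two]
            norm_num
          refine tendsto_const_nhds.congr' ?_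
          filter_upwards [eventually_ge_atTop ((s:ℤ) + 10)] with g hg
          rw [expr_eq m k g (by rw [← hs]; exact hg)]
          rw [← hM, hMc, trace_mul_two]
          simp
        · -- s ≥ 2 : squeeze to 0
          set D : ℚ := (M 0 0).coeff 0 - (M 1 1).coeff 0 with hD
          set A : ℚ := (M 0 1).coeff 1 with hA
          set B : ℚ := (M 1 0).coeff 0 with hB
          set Cq : ℚ := 2 * |D| + |A| + |B| with hCq
          refine squeeze_zero_norm' ?_ (tendsto_aux_inv ((Cq : ℝ)))
          filter_upwards [eventually_ge_atTop ((s:ℤ) + 10)] with g hg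
          rw [expr_eq m k g (by rw [← hs]; exact hg)]
          set Kt : ℕ := (4 * g + 2 * ((m + 3 : ℕ) : ℤ) - 2 - ((∑ p, k p : ℕ) : ℤ)).toNat with hKtdef
          set At : ℕ := (4 * g + 2 * ((m + 3 : ℕ) : ℤ) - 5).toNat with hAtdef
          have hKt : (Kt : ℤ) = 4 * g + 2 * ((m + 3 : ℕ) : ℤ) - 2 - (s : ℤ) := by
            rw [hKtdef, ← hs]; push_cast; omega
          have hAt : (At : ℤ) = 4 * g + 2 * ((m + 3 : ℕ) : ℤ) - 5 := by
            rw [hAtdef]; push_cast; omega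
          clear_value Kt At
          clear_value s M D A B Cq
          have hg0 : (0:ℤ) < g := by omega
          have hgR : (0:ℝ) < (g:ℝ) := by exact_mod_cast hg0
          have hdfA : (0:ℝ) < (df At : ℝ) := by exact_mod_cast df_pos At
          rw [← hM]
          rw [Real.norm_eq_abs, abs_div, abs_of_pos (by positivity : (0:ℝ) < 2 * (df At : ℝ)),
            ← div_eq_mul_inv, div_le_div_iff₀ (by positivity) hgR]
          have hgQKt : ((g:ℤ) : ℚ) ≤ (Kt : ℚ) := by exact_mod_cast (by omega : g ≤ (Kt:ℤ))
          have hgQAt : ((g:ℤ) : ℚ) ≤ (At : ℚ) := by exact_mod_cast (by omega : g ≤ (At:ℤ))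
          have hgQ : (0:ℚ) < ((g:ℤ) : ℚ) := by exact_mod_cast hg0
          have hKtQ : (0:ℚ) < (Kt : ℚ) := lt_of_lt_of_le hgQ hgQKt
          rcases Nat.even_or_odd s with hse | hso
          · have hsm : s % 2 = 0 := Nat.even_iff.mp hse
            rw [Bmat_even Kt (by omega) (by omega), coeff_trace_even, ← hD]
            have heps : |1 + (-1:ℚ) ^ ((Kt - 2) / 2)| ≤ 2 := by
              rcases Nat.even_or_odd ((Kt - 2) / 2) with h | h
              · rw [h.neg_one_pow]; norm_num
              · rw [h.neg_one_pow]; norm_num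
            have hdfle : (df (Kt - 1) : ℚ) ≤ (df At : ℚ) := by
              have heq : (Kt - 1) + 2 * ((s - 2) / 2) = At := by omega
              have h := df_le_df_add_two_mul (Kt - 1) ((s - 2) / 2)
              rw [heq] at h
              exact_mod_cast h
            have hQ : |(df (Kt - 1) : ℚ) * (1 + (-1:ℚ) ^ ((Kt - 2) / 2)) / (Kt : ℚ) * D|
                * ((g:ℤ) : ℚ) ≤ Cq * (2 * (df At : ℚ)) := by
              have habs : |(df (Kt - 1) : ℚ) * (1 + (-1:ℚ) ^ ((Kt - 2) / 2)) / (Kt : ℚ) * D|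
                  = (df (Kt - 1) : ℚ) * |1 + (-1:ℚ) ^ ((Kt - 2) / 2)| * |D| / (Kt : ℚ) := by
                rw [abs_mul, abs_div, abs_mul, abs_of_nonneg (by positivity : (0:ℚ) ≤ (df (Kt-1) : ℚ)),
                  abs_of_pos hKtQ]
                ring
              rw [habs]
              calc (df (Kt - 1) : ℚ) * |1 + (-1:ℚ) ^ ((Kt - 2) / 2)| * |D| / (Kt : ℚ) * ((g:ℤ) : ℚ)
                  ≤ (df (Kt - 1) : ℚ) * |1 + (-1:ℚ) ^ ((Kt - 2) / 2)| * |D| / (Kt : ℚ) * (Kt : ℚ) := by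
                    gcongr
                _ = (df (Kt - 1) : ℚ) * |1 + (-1:ℚ) ^ ((Kt - 2) / 2)| * |D| := by
                    field_simp
                _ ≤ (df At : ℚ) * 2 * |D| := by gcongr
                _ ≤ Cq * (2 * (df At : ℚ)) := by
                    rw [hCq]
                    nlinarith [abs_nonneg A, abs_nonneg B, abs_nonneg D,
                      (by positivity : (0:ℚ) ≤ (df At : ℚ))]
            exact_mod_cast hQ
          · have hsm : s % 2 = 1 := Nat.odd_iff.mp hso
            rw [Bmat_odd Kt (by omega), coeff_trace_odd, ← hA, ← hB]
            have heps : |(-1:ℚ) ^ ((Kt - 1) / 2)| = 1 := by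
              rw [abs_pow, abs_neg, abs_one, one_pow]
            have hdfle : (df (Kt - 2) : ℚ) * (At : ℚ) ≤ (df At : ℚ) := by
              have heq : (Kt - 2) + 2 * ((s - 3) / 2) = At - 2 := by omega
              have h := df_le_df_add_two_mul (Kt - 2) ((s - 3) / 2)
              rw [heq] at h
              have h2 : df (At - 2) * At ≤ df At := by
                have e : At - 2 + 2 = At := by omega
                have := df_add_two (At - 2)
                rw [e] at this
                rw [this]
                exact le_of_eq (Nat.mul_comm _ _)
              have h3 : df (Kt - 2) * At ≤ df At :=
                le_trans (Nat.mul_le_mul_right _ h) h2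
              exact_mod_cast h3
            have hQ : |(df (Kt - 2) : ℚ) * (-1:ℚ) ^ ((Kt - 1) / 2) * A - (df (Kt - 2) : ℚ) * B|
                * ((g:ℤ) : ℚ) ≤ Cq * (2 * (df At : ℚ)) := by
              have h1 : |(df (Kt - 2) : ℚ) * (-1:ℚ) ^ ((Kt - 1) / 2) * A - (df (Kt - 2) : ℚ) * B|
                  ≤ (df (Kt - 2) : ℚ) * (|A| + |B|) := by
                calc |(df (Kt - 2) : ℚ) * (-1:ℚ) ^ ((Kt - 1) / 2) * A - (df (Kt - 2) : ℚ) * B|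
                    ≤ |(df (Kt - 2) : ℚ) * (-1:ℚ) ^ ((Kt - 1) / 2) * A| + |(df (Kt - 2) : ℚ) * B| :=
                      abs_sub _ _
                  _ = (df (Kt - 2) : ℚ) * |A| + (df (Kt - 2) : ℚ) * |B| := by
                      rw [abs_mul, abs_mul, abs_mul, heps,
                        abs_of_nonneg (by positivity : (0:ℚ) ≤ (df (Kt-2) : ℚ))]
                      ring
                  _ = (df (Kt - 2) : ℚ) * (|A| + |B|) := by ring
              calc |(df (Kt - 2) : ℚ) * (-1:ℚ) ^ ((Kt - 1) / 2) * A - (df (Kt - 2) : ℚ) * B|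
                  * ((g:ℤ) : ℚ)
                  ≤ ((df (Kt - 2) : ℚ) * (|A| + |B|)) * (At : ℚ) := by
                    have hx : (0:ℚ) ≤ (df (Kt - 2) : ℚ) * (|A| + |B|) := by positivity
                    apply mul_le_mul h1 hgQAt (le_of_lt hgQ) hx
                _ = ((df (Kt - 2) : ℚ) * (At : ℚ)) * (|A| + |B|) := by ring
                _ ≤ (df At : ℚ) * (|A| + |B|) := by
                    apply mul_le_mul_of_nonneg_right hdfle (by positivity)
                _ ≤ Cq * (2 * (df At : ℚ)) := by
                    rw [hCq]
                    nlinarith [abs_nonneg A, abs_nonneg B, abs_nonneg D,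
                      (by positivity : (0:ℚ) ≤ (df At : ℚ))]
            exact_mod_cast hQ
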